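/- Define β by β_{w(i)} := α_{w(i)} − (k+1)n for 1 ≤ i ≤ t, β_{w(i)} := α_{w(i)} − kn for t < i ≤ m, β_{w(i)} := α_{w(i)} + n for m+1 ≤ i ≤ m+T, and β_{w(i)} := α_{w(i)} for i > m+T. Then the ranks of β satisfy: r(β,w(m+i)) = i for 1 ≤ i ≤ T; r(β,w(t+i)) = mk + t + i for 1 ≤ i ≤ m − t; r(β,w(i)) = m(k+1) + i for 1 ≤ i ≤ t; and r(β,w(i)) = i for m+T < i ≤ N. -/

import Mathlib

/-- The rank function `r(α,i)` for a composition indexed by `1,…,N`. -/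
def rnk (N : ℕ) (α : ℕ → ℕ) (i : ℕ) : ℕ :=
  ((Finset.Icc 1 N).filter fun j => α i < α j).card +
  ((Finset.Icc 1 i).filter fun j => α j = α i).card

/-- The length `ℓ(α)`: largest index with a nonzero part. -/
def len (N : ℕ) (α : ℕ → ℕ) : ℕ :=
  ((Finset.Icc 1 N).filter fun j => α j ≠ 0).sup id

/-- The weight `|α| = Σ α_i`. -/
def wt (N : ℕ) (α : ℕ → ℕ) : ℕ := ∑ i ∈ Finset.Icc 1 N, α i

/-- The deformation `α̃_i = α_i - i·υ` with `υ = 1/(N+1)`. -/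
def tilde (N : ℕ) (α : ℕ → ℕ) (i : ℕ) : ℚ := (α i : ℚ) - (i : ℚ) / ((N : ℚ) + 1)

/-- The leg-length `L(α;i,j)`. -/
def leg (N : ℕ) (α : ℕ → ℕ) (i j : ℕ) : ℕ :=
  ((Finset.Icc 1 N).filter fun l => i < l ∧ j ≤ α l ∧ α l ≤ α i).card +
  ((Finset.Icc 1 N).filter fun l => l < i ∧ j ≤ α l + 1 ∧ α l + 1 ≤ α i).card

/-- The decreasing rearrangement `α⁺`: `α⁺_i = α_{w(i)}` where `w` inverts the rank. -/
def part (N : ℕ) (α : ℕ → ℕ) (i : ℕ) : ℕ :=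
  ∑ j ∈ (Finset.Icc 1 N).filter (fun j => rnk N α j = i), α j

/-- Strict dominance order `α ≻ β`. -/
def sdom (N : ℕ) (α β : ℕ → ℕ) : Prop :=
  (∃ i ∈ Finset.Icc 1 N, α i ≠ β i) ∧
  ∀ k, k ≤ N → ∑ j ∈ Finset.Icc 1 k, β j ≤ ∑ j ∈ Finset.Icc 1 k, α j

/-- The order `α ▷ β`. -/
def tri (N : ℕ) (α β : ℕ → ℕ) : Prop :=
  wt N α = wt N β ∧
  (sdom N (part N α) (part N β) ∨
    ((∀ i ∈ Finset.Icc 1 N, part N α i = part N β i) ∧ sdom N α β))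

/-- `(α,β)` is a `(-n/m)`-critical pair. -/
def critical (N m n : ℕ) (α β : ℕ → ℕ) : Prop :=
  tri N α β ∧ ∀ i ∈ Finset.Icc 1 N,
    ((rnk N β i : ℤ) - (rnk N α i : ℤ)) * (n : ℤ) = (m : ℤ) * ((α i : ℤ) - (β i : ℤ))

/-- `(x,i)` comes strictly before `(y,j)` in the ranking order. -/
def LO (x : ℚ) (i : ℕ) (y : ℚ) (j : ℕ) : Prop := y < x ∨ (x = y ∧ i < j)

lemma LO_trans {x y z : ℚ} {i j l : ℕ} (h1 : LO x i y j) (h2 : LO y j z l) : LO x i z l := by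
  rcases h1 with h1 | ⟨h1, h1'⟩ <;> rcases h2 with h2 | ⟨h2, h2'⟩
  · exact Or.inl (h2.trans h1)
  · exact Or.inl (h2 ▸ h1)
  · exact Or.inl (by linarith)
  · exact Or.inr ⟨h1.trans h2, h1'.trans h2'⟩

lemma LO_shift {x y : ℚ} {i j : ℕ} (c : ℚ) (h : LO x i y j) : LO (x + c) i (y + c) j := by
  rcases h with h | ⟨h, h'⟩
  · exact Or.inl (by linarith)
  · exact Or.inr ⟨by rw [h], h'⟩

lemma LO_of_eq {x x' y y' : ℚ} {i j : ℕ} (hx : x = x') (hy : y = y') (h : LO x i y j) :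
    LO x' i y' j := hx ▸ hy ▸ h

lemma rnk_eq_card (N : ℕ) (β : ℕ → ℕ) (j : ℕ) (h2 : j ≤ N) :
    rnk N β j = ((Finset.Icc 1 N).filter fun i => β j < β i ∨ (β i = β j ∧ i ≤ j)).card := by
  unfold rnk
  rw [Finset.filter_or, Finset.card_union_of_disjoint]
  · congr 1
    apply Finset.card_bij (fun a _ => a)
    · intro a ha
      simp only [Finset.mem_filter, Finset.mem_Icc] at ha ⊢
      exact ⟨⟨ha.1.1, ha.1.2.trans h2⟩, ha.2, ha.1.2⟩
    · intro a _ b _ h; exact h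
    · intro b hb
      simp only [Finset.mem_filter, Finset.mem_Icc] at hb
      exact ⟨b, by simp only [Finset.mem_filter, Finset.mem_Icc]; exact ⟨⟨hb.1.1, hb.2.2⟩, hb.2.1⟩, rfl⟩
  · rw [Finset.disjoint_left]
    intro a ha hb
    simp only [Finset.mem_filter] at ha hb
    omega

lemma rnk_pos (N : ℕ) (β : ℕ → ℕ) (j : ℕ) (h : 1 ≤ j) : 1 ≤ rnk N β j := by
  have hj : j ∈ (Finset.Icc 1 j).filter fun i => β i = β j := by
    simp [Finset.mem_Icc, h]
  have := Finset.card_pos.mpr ⟨j, hj⟩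
  unfold rnk; omega

lemma rnk_le (N : ℕ) (β : ℕ → ℕ) (j : ℕ) (h2 : j ≤ N) : rnk N β j ≤ N := by
  rw [rnk_eq_card N β j h2]
  calc _ ≤ (Finset.Icc 1 N).card := Finset.card_filter_le _ _
  _ = N := by rw [Nat.card_Icc]; omega

lemma rnk_lt (N : ℕ) (β : ℕ → ℕ) (j1 j2 : ℕ) (ha2 : j1 ≤ N)
    (hb1 : 1 ≤ j2) (hb2 : j2 ≤ N)
    (h : LO ((β j1 : ℚ)) j1 ((β j2 : ℚ)) j2) : rnk N β j1 < rnk N β j2 := by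
  have h' : β j2 < β j1 ∨ (β j1 = β j2 ∧ j1 < j2) := by
    rcases h with h | ⟨h, h'⟩
    · exact Or.inl (by exact_mod_cast h)
    · exact Or.inr ⟨by exact_mod_cast h, h'⟩
  rw [rnk_eq_card N β j1 ha2, rnk_eq_card N β j2 hb2]
  apply Finset.card_lt_card
  rw [Finset.ssubset_iff_of_subset]
  · refine ⟨j2, ?_, ?_⟩
    · simp only [Finset.mem_filter, Finset.mem_Icc]
      exact ⟨⟨hb1, hb2⟩, Or.inr ⟨trivial, le_rfl⟩⟩
    · simp only [Finset.mem_filter, Finset.mem_Icc]; omega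
  · intro a ha
    simp only [Finset.mem_filter, Finset.mem_Icc] at ha ⊢
    omega

lemma chain_eq (f : ℕ → ℕ) (N : ℕ) (h1 : 1 ≤ f 1) (h2 : f N ≤ N)
    (hmono : ∀ ρ, 1 ≤ ρ → ρ + 1 ≤ N → f ρ < f (ρ + 1)) :
    ∀ ρ, 1 ≤ ρ → ρ ≤ N → f ρ = ρ := by
  have key : ∀ d ρ, 1 ≤ ρ → ρ + d ≤ N → f ρ + d ≤ f (ρ + d) := by
    intro d
    induction d with
    | zero => simp
    | succ d ih =>
      intro ρ hρ hle
      have ha := ih ρ hρ (by omega)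
      have hb := hmono (ρ + d) (by omega) (by omega)
      have he : ρ + (d+1) = (ρ + d) + 1 := by omega
      rw [he]; omega
  intro ρ hρ hρN
  have ha := key (ρ - 1) 1 le_rfl (by omega)
  have hb := key (N - ρ) ρ hρ (by omega)
  rw [show 1 + (ρ - 1) = ρ by omega] at ha
  rw [show ρ + (N - ρ) = N by omega] at hb
  omega

lemma tilde_lt (N : ℕ) (α : ℕ → ℕ) (u v : ℕ) (c : ℤ) (hu1 : 1 ≤ u) (huN : u ≤ N)
    (hv1 : 1 ≤ v) (hvN : v ≤ N) :
    (tilde N α u + c < tilde N α v) ↔ ((α u : ℤ) + c < α v ∨ ((α v : ℤ) = α u + c ∧ v < u)) := by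
  have hN1 : (0:ℚ) < (N:ℚ) + 1 := by positivity
  have step1 : (tilde N α u + c < tilde N α v) ↔
      ((α u : ℚ) + c - α v) * ((N:ℚ)+1) < (u:ℚ) - v := by
    rw [← lt_div_iff₀ hN1]
    unfold tilde
    rw [sub_div]
    constructor <;> intro h <;> linarith
  have step2 : (((α u : ℚ) + c - α v) * ((N:ℚ)+1) < (u:ℚ) - v) ↔
      (((α u : ℤ) + c - α v) * ((N:ℤ)+1) < (u:ℤ) - v) := by
    constructor <;> intro h <;> exact_mod_cast h
  rw [step1, step2]
  have hu' : (1:ℤ) ≤ u := by exact_mod_cast hu1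
  have hu'' : (u:ℤ) ≤ N := by exact_mod_cast huN
  have hv' : (1:ℤ) ≤ v := by exact_mod_cast hv1
  have hv'' : (v:ℤ) ≤ N := by exact_mod_cast hvN
  set x : ℤ := (α u : ℤ) + c - α v with hx
  constructor
  · intro h
    rcases lt_trichotomy x 0 with hlt | heq | hgt
    · left; omega
    · right
      refine ⟨by omega, ?_⟩
      have hpos : (0:ℤ) < (u:ℤ) - v := by rw [heq] at h; simpa using h
      omega
    · exfalso
      have h1 : (1:ℤ) ≤ x := hgt
      nlinarith
  · intro h
    rcases h with h | ⟨h, h'⟩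
    · have h1 : x ≤ -1 := by omega
      nlinarith
    · have h1 : x = 0 := by omega
      rw [h1]
      simp only [zero_mul]
      have hvu : (v:ℤ) < u := by exact_mod_cast h'
      omega

lemma tilde_lt_LO (N : ℕ) (α : ℕ → ℕ) (u v : ℕ) (c : ℤ) (hu1 : 1 ≤ u) (huN : u ≤ N)
    (hv1 : 1 ≤ v) (hvN : v ≤ N) (h : tilde N α u + c < tilde N α v) :
    LO ((α v : ℚ)) v ((α u : ℚ) + c) u := by
  rcases (tilde_lt N α u v c hu1 huN hv1 hvN).1 h with h | ⟨h, h'⟩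
  · left; exact_mod_cast h
  · right; exact ⟨by exact_mod_cast h, h'⟩

/-- the ranks of the constructed composition `β`. -/
theorem beta_ranks (N : ℕ) (α β : ℕ → ℕ) (w : ℕ → ℕ) (m n T t k : ℕ) (ξ : ℕ → ℚ)
    (hN : 1 ≤ N)
    (hNfull : N = len N α + wt N α)
    (hsupp : ∀ i, N < i → α i = 0)
    (hw : ∀ i, 1 ≤ i → 1 ≤ w i ∧ rnk N α (w i) = i)
    (hn1 : 1 ≤ n) (hn2 : n ≤ α (w 1))
    (hm : leg N α (w 1) (α (w 1) + 1 - n) + 1 = m)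
    (hξ : ∀ k i, 1 ≤ i → i ≤ m → ξ (m * k + i) = tilde N α (w i) - (n : ℚ) * k)
    (hT1 : 1 ≤ T)
    (hT2 : ∀ s, 1 ≤ s → s < T → tilde N α (w (m + s)) < ξ (m + s + 1))
    (hT3 : ξ (m + T + 1) < tilde N α (w (m + T)))
    (ht : t = (T - 1) % m + 1) (hk : k = (T - t) / m)
    (hβ : ∀ i, 1 ≤ i →
      (i ≤ t → (β (w i) : ℤ) = (α (w i) : ℤ) - (k + 1) * n) ∧
      (t < i → i ≤ m → (β (w i) : ℤ) = (α (w i) : ℤ) - k * n) ∧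
      (m < i → i ≤ m + T → β (w i) = α (w i) + n) ∧
      (m + T < i → β (w i) = α (w i))) :
    (∀ i, 1 ≤ i → i ≤ T → rnk N β (w (m + i)) = i) ∧
    (∀ i, 1 ≤ i → i ≤ m - t → rnk N β (w (t + i)) = m * k + t + i) ∧
    (∀ i, 1 ≤ i → i ≤ t → rnk N β (w i) = m * (k + 1) + i) ∧
    (∀ i, m + T < i → i ≤ N → rnk N β (w i) = i) := by
  have hm1 : 1 ≤ m := by omega
  have hmm : m * (k + 1) = m * k + m := by ring
  have hTmk : T = m * k + t := by
    have hdm := Nat.div_add_mod (T - 1) m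
    have hTt : T - t = m * ((T - 1) / m) := by omega
    have hk' : k = (T - 1) / m := by
      rw [hk, hTt, Nat.mul_div_cancel_left _ hm1]
    rw [hk']; omega
  have ht1 : 1 ≤ t := by omega
  have htm : t ≤ m := by
    have := Nat.mod_lt (T - 1) (show 0 < m by omega)
    omega
  have hweq : ∀ i j, 1 ≤ i → 1 ≤ j → w i = w j → i = j := by
    intro i j hi hj he
    have h1 := (hw i hi).2
    have h2 := (hw j hj).2
    rw [he] at h1; omega
  have hwle : ∀ i, 1 ≤ i → i ≤ N → w i ≤ N := by
    intro i hi hiN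
    by_contra hgt
    push_neg at hgt
    have hz : α (w i) = 0 := hsupp _ hgt
    have hr := (hw i hi).2
    unfold rnk at hr
    have hsub : ((Finset.Icc 1 N).filter fun j => α j = 0) ∪ Finset.Icc (N+1) (w i) ⊆
        (Finset.Icc 1 (w i)).filter fun j => α j = α (w i) := by
      intro a ha
      simp only [Finset.mem_union, Finset.mem_filter, Finset.mem_Icc] at ha ⊢
      rcases ha with ⟨⟨ha1, ha2⟩, ha3⟩ | ⟨ha1, ha2⟩
      · exact ⟨⟨ha1, by omega⟩, by rw [hz]; exact ha3⟩
      · exact ⟨⟨by omega, ha2⟩, by rw [hz]; exact hsupp a (by omega)⟩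
    have hdisj : Disjoint ((Finset.Icc 1 N).filter fun j => α j = 0) (Finset.Icc (N+1) (w i)) := by
      rw [Finset.disjoint_left]
      intro a ha hb
      simp only [Finset.mem_filter, Finset.mem_Icc] at ha hb
      omega
    have hc1 := Finset.card_le_card hsub
    rw [Finset.card_union_of_disjoint hdisj, Nat.card_Icc] at hc1
    have hsplit := Finset.card_filter_add_card_filter_not
      (s := Finset.Icc 1 N) (p := fun j => α (w i) < α j)
    have hneg : ((Finset.Icc 1 N).filter fun j => ¬ α (w i) < α j) =
        (Finset.Icc 1 N).filter fun j => α j = 0 := by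
      apply Finset.filter_congr
      intro x hx
      rw [hz]
      constructor
      · intro h; simp at h; omega
      · intro h; simp; omega
    rw [hneg] at hsplit
    rw [Nat.card_Icc] at hsplit
    omega
  have hsorted : ∀ i j, 1 ≤ i → i < j → j ≤ N →
      LO ((α (w i) : ℚ)) (w i) ((α (w j) : ℚ)) (w j) := by
    intro i j hi hij hjN
    have hiN : i ≤ N := by omega
    have hwi := hw i (by omega)
    have hwj := hw j (by omega)
    rcases Nat.lt_trichotomy (α (w j)) (α (w i)) with hv | hv | hv
    · exact Or.inl (by exact_mod_cast hv)
    · rcases Nat.lt_trichotomy (w i) (w j) with hx | hx | hx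
      · exact Or.inr ⟨by exact_mod_cast hv.symm, hx⟩
      · exact absurd (hweq i j (by omega) (by omega) hx) (by omega)
      · exfalso
        have hlt := rnk_lt N α (w j) (w i) (hwle j (by omega) hjN) hwi.1 (hwle i (by omega) hiN)
          (Or.inr ⟨by exact_mod_cast hv, hx⟩)
        rw [hwi.2, hwj.2] at hlt
        omega
    · exfalso
      have hlt := rnk_lt N α (w j) (w i) (hwle j (by omega) hjN) hwi.1 (hwle i (by omega) hiN)
        (Or.inl (by exact_mod_cast hv))
      rw [hwi.2, hwj.2] at hlt
      omega
  -- basic facts about the maximum part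
  have hw1p := hw 1 le_rfl
  have hw1N : w 1 ≤ N := hwle 1 le_rfl hN
  have fact1 : ∀ l, 1 ≤ l → l ≤ N → α l ≤ α (w 1) := by
    intro l h1 h2
    by_contra hgt
    push_neg at hgt
    have hlt := rnk_lt N α l (w 1) h2 hw1p.1 hw1N (Or.inl (by exact_mod_cast hgt))
    rw [hw1p.2] at hlt
    have hp := rnk_pos N α l h1
    omega
  have fact2 : ∀ l, 1 ≤ l → l < w 1 → α l < α (w 1) := by
    intro l h1 h2
    rcases Nat.lt_or_ge (α l) (α (w 1)) with h | h
    · exact h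
    · exfalso
      have he : α l = α (w 1) := le_antisymm (fact1 l h1 (by omega)) h
      have hlt := rnk_lt N α l (w 1) (by omega) hw1p.1 hw1N (Or.inr ⟨by exact_mod_cast he, h2⟩)
      rw [hw1p.2] at hlt
      have hp := rnk_pos N α l h1
      omega
  -- the set of "large" parts has cardinality m
  have hCcard : ((Finset.Icc 1 N).filter fun l =>
      α (w 1) < α l + n ∨ (α l + n = α (w 1) ∧ l < w 1)).card = m := by
    have hsplit : ((Finset.Icc 1 N).filter fun l =>
        α (w 1) < α l + n ∨ (α l + n = α (w 1) ∧ l < w 1)) =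
        (((Finset.Icc 1 N).filter fun l => w 1 < l ∧ α (w 1) + 1 - n ≤ α l ∧ α l ≤ α (w 1)) ∪
         ((Finset.Icc 1 N).filter fun l => l < w 1 ∧ α (w 1) + 1 - n ≤ α l + 1 ∧ α l + 1 ≤ α (w 1))) ∪
        {w 1} := by
      ext l
      simp only [Finset.mem_union, Finset.mem_filter, Finset.mem_Icc, Finset.mem_singleton]
      constructor
      · rintro ⟨⟨hl1, hl2⟩, hC⟩
        have hle := fact1 l hl1 hl2
        rcases Nat.lt_trichotomy l (w 1) with hx | hx | hx
        · have := fact2 l hl1 hx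
          left; right; exact ⟨⟨hl1, hl2⟩, hx, by omega, by omega⟩
        · right; exact hx
        · left; left; exact ⟨⟨hl1, hl2⟩, hx, by omega, by omega⟩
      · intro h
        rcases h with (⟨⟨hl1, hl2⟩, hx, hy, hz2⟩ | ⟨⟨hl1, hl2⟩, hx, hy, hz2⟩) | h
        · exact ⟨⟨hl1, hl2⟩, by omega⟩
        · exact ⟨⟨hl1, hl2⟩, by omega⟩
        · subst h; exact ⟨⟨hw1p.1, hw1N⟩, by omega⟩
    have hd1 : Disjoint
        (((Finset.Icc 1 N).filter fun l => w 1 < l ∧ α (w 1) + 1 - n ≤ α l ∧ α l ≤ α (w 1)) ∪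
         ((Finset.Icc 1 N).filter fun l => l < w 1 ∧ α (w 1) + 1 - n ≤ α l + 1 ∧ α l + 1 ≤ α (w 1)))
        ({w 1} : Finset ℕ) := by
      rw [Finset.disjoint_left]
      intro a ha hb
      simp only [Finset.mem_union, Finset.mem_filter, Finset.mem_Icc] at ha
      simp only [Finset.mem_singleton] at hb
      subst hb
      rcases ha with ⟨_, h, _⟩ | ⟨_, h, _⟩ <;> omega
    have hd2 : Disjoint
        ((Finset.Icc 1 N).filter fun l => w 1 < l ∧ α (w 1) + 1 - n ≤ α l ∧ α l ≤ α (w 1))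
        ((Finset.Icc 1 N).filter fun l => l < w 1 ∧ α (w 1) + 1 - n ≤ α l + 1 ∧ α l + 1 ≤ α (w 1)) := by
      rw [Finset.disjoint_left]
      intro a ha hb
      simp only [Finset.mem_filter, Finset.mem_Icc] at ha hb
      omega
    rw [hsplit, Finset.card_union_of_disjoint hd1, Finset.card_union_of_disjoint hd2,
      Finset.card_singleton]
    unfold leg at hm
    omega
  have hmN : m ≤ N := by
    rw [← hCcard]
    calc ((Finset.Icc 1 N).filter fun l =>
        α (w 1) < α l + n ∨ (α l + n = α (w 1) ∧ l < w 1)).card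
        ≤ (Finset.Icc 1 N).card := Finset.card_filter_le _ _
      _ = N := by rw [Nat.card_Icc]; omega
  have hX : ∀ l, 1 ≤ l → l ≤ N →
      (α (w 1) < α l + n ∨ (α l + n = α (w 1) ∧ l < w 1)) → rnk N α l ≤ m := by
    intro l h1 h2 hC
    rw [rnk_eq_card N α l h2, ← hCcard]
    apply Finset.card_le_card
    intro a ha
    simp only [Finset.mem_filter, Finset.mem_Icc] at ha ⊢
    refine ⟨ha.1, ?_⟩
    rcases ha.2 with h | h <;> rcases hC with h' | h' <;> omega
  have hY : ∀ l, 1 ≤ l → l ≤ N →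
      ¬(α (w 1) < α l + n ∨ (α l + n = α (w 1) ∧ l < w 1)) → m + 1 ≤ rnk N α l := by
    intro l h1 h2 hC
    rw [rnk_eq_card N α l h2]
    have hsub : insert l ((Finset.Icc 1 N).filter fun l' =>
        α (w 1) < α l' + n ∨ (α l' + n = α (w 1) ∧ l' < w 1)) ⊆
        (Finset.Icc 1 N).filter fun i => α l < α i ∨ (α i = α l ∧ i ≤ l) := by
      intro a ha
      simp only [Finset.mem_insert, Finset.mem_filter, Finset.mem_Icc] at ha ⊢
      rcases ha with rfl | ⟨hmem, hCa⟩
      · exact ⟨⟨h1, h2⟩, Or.inr ⟨rfl, le_rfl⟩⟩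
      · refine ⟨hmem, ?_⟩
        rcases hCa with h | h <;> omega
    have hcard := Finset.card_le_card hsub
    rw [Finset.card_insert_of_notMem] at hcard
    · rw [hCcard] at hcard; omega
    · simp only [Finset.mem_filter, Finset.mem_Icc]
      intro hx
      exact hC hx.2
  have hC_rank : ∀ i, 1 ≤ i → i ≤ m →
      (α (w 1) < α (w i) + n ∨ (α (w i) + n = α (w 1) ∧ w i < w 1)) := by
    intro i h1 h2
    by_contra hc
    have hy := hY (w i) (hw i h1).1 (hwle i h1 (by omega)) hc
    rw [(hw i h1).2] at hy
    omega
  -- m + T ≤ N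
  have hmTN : m + T ≤ N := by
    by_contra hcon
    push_neg at hcon
    set M := N + 1 - m with hM
    have hM1 : 1 ≤ M := by omega
    have hH : ∀ j q, 1 ≤ j → j ≤ m → m * q + j ≤ M → n * (q + 1) ≤ α (w j) := by
      intro j q hj1 hjm hle
      rcases Nat.eq_zero_or_pos (m * q + j - 1) with h0 | hpos
      · have hj : j = 1 := by omega
        have hq : m * q = 0 := by omega
        have hq0 : q = 0 := by
          rcases Nat.mul_eq_zero.1 hq with h | h
          · omega
          · exact h
        subst hj; subst hq0
        simpa using hn2
      · have hsT : m * q + j - 1 < T := by omega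
        have h2 := hT2 (m * q + j - 1) hpos hsT
        have hξ1 := hξ (q + 1) j hj1 hjm
        rw [show m * (q + 1) + j = m + (m * q + j - 1) + 1 from by
          have : m * (q + 1) = m * q + m := by ring
          omega] at hξ1
        rw [hξ1] at h2
        have hineq : tilde N α (w (m + (m * q + j - 1))) + ((n * (q + 1) : ℕ) : ℤ) <
            tilde N α (w j) := by
          push_cast at h2 ⊢
          linarith
        have hres := (tilde_lt N α (w (m + (m * q + j - 1))) (w j) _
          (hw _ (by omega)).1 (hwle _ (by omega) (by omega))
          (hw j hj1).1 (hwle j hj1 (by omega))).1 hineq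
        rcases hres with h | ⟨h, _⟩ <;> omega
    have hfib : ∀ j, 1 ≤ j → j ≤ m →
        n * ((Finset.Icc 1 M).filter fun x => (x - 1) % m + 1 = j).card ≤ α (w j) := by
      intro j hj1 hjm
      rcases Finset.eq_empty_or_nonempty
        ((Finset.Icc 1 M).filter fun x => (x - 1) % m + 1 = j) with he | hne
      · rw [he]; simp
      · obtain ⟨x0, hx0⟩ := hne
        simp only [Finset.mem_filter, Finset.mem_Icc] at hx0
        have hjM : j ≤ M := by
          have := Nat.mod_le (x0 - 1) m
          omega
        have hinj : Function.Injective (fun q => m * q + j) := by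
          intro q1 q2 h
          simp only at h
          have h' : m * q1 = m * q2 := by omega
          exact Nat.eq_of_mul_eq_mul_left (by omega) h'
        have himg : ((Finset.Icc 1 M).filter fun x => (x - 1) % m + 1 = j) =
            (Finset.range ((M - j) / m + 1)).image fun q => m * q + j := by
          ext x
          simp only [Finset.mem_filter, Finset.mem_Icc, Finset.mem_image, Finset.mem_range]
          constructor
          · rintro ⟨⟨hx1, hx2⟩, hx3⟩
            have hdm := Nat.div_add_mod (x - 1) m
            refine ⟨(x - 1) / m, ?_, by omega⟩
            have hq : (x - 1) / m ≤ (M - j) / m := by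
              rw [Nat.le_div_iff_mul_le (by omega : 0 < m)]
              have hcomm : (x - 1) / m * m = m * ((x - 1) / m) := Nat.mul_comm _ _
              omega
            omega
          · rintro ⟨q, hq, rfl⟩
            have hdiv := Nat.div_mul_le_self (M - j) m
            have hcomm : (M - j) / m * m = m * ((M - j) / m) := Nat.mul_comm _ _
            have hmono : m * q ≤ m * ((M - j) / m) := Nat.mul_le_mul_left m (by omega)
            refine ⟨⟨by omega, by omega⟩, ?_⟩
            have he1 : m * q + j - 1 = m * q + (j - 1) := by omega
            rw [he1, Nat.mul_add_mod, Nat.mod_eq_of_lt (by omega : j - 1 < m)]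
            omega
        rw [himg, Finset.card_image_of_injective _ hinj, Finset.card_range]
        apply hH j ((M - j) / m) hj1 hjm
        have hdiv := Nat.div_mul_le_self (M - j) m
        have hcomm : (M - j) / m * m = m * ((M - j) / m) := Nat.mul_comm _ _
        omega
    have hcount : ∑ j ∈ Finset.Icc 1 m,
        ((Finset.Icc 1 M).filter fun x => (x - 1) % m + 1 = j).card = M := by
      rw [← Finset.card_eq_sum_card_fiberwise
        (f := fun x => (x - 1) % m + 1) (t := Finset.Icc 1 m)]
      · rw [Nat.card_Icc]; omega
      · intro x hx
        simp only [Finset.mem_coe, Finset.mem_Icc] at hx ⊢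
        have := Nat.mod_lt (x - 1) (show 0 < m by omega)
        omega
    have hsum1 : n * M ≤ ∑ j ∈ Finset.Icc 1 m, α (w j) := by
      calc n * M = ∑ j ∈ Finset.Icc 1 m,
          n * ((Finset.Icc 1 M).filter fun x => (x - 1) % m + 1 = j).card := by
            rw [← Finset.mul_sum, hcount]
        _ ≤ _ := Finset.sum_le_sum fun j hj => by
            simp only [Finset.mem_Icc] at hj
            exact hfib j hj.1 hj.2
    have hsum2 : ∑ j ∈ Finset.Icc 1 m, α (w j) ≤ wt N α := by
      unfold wt
      have himg : ∑ l ∈ (Finset.Icc 1 m).image w, α l = ∑ j ∈ Finset.Icc 1 m, α (w j) :=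
        Finset.sum_image (fun x hx y hy hxy => by
          simp only [Finset.mem_coe, Finset.mem_Icc] at hx hy
          exact hweq x y (by omega) (by omega) hxy)
      rw [← himg]
      apply Finset.sum_le_sum_of_subset
      intro l hl
      simp only [Finset.mem_image, Finset.mem_Icc] at hl ⊢
      obtain ⟨j, ⟨hj1, hj2⟩, rfl⟩ := hl
      exact ⟨(hw j hj1).1, hwle j hj1 (by omega)⟩
    have hw1len : w 1 ≤ len N α := by
      apply Finset.le_sup (f := id) (b := w 1)
      simp only [Finset.mem_filter, Finset.mem_Icc]
      exact ⟨⟨hw1p.1, hw1N⟩, by omega⟩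
    have hlen : m ≤ len N α := by
      have hsub : ((Finset.Icc 1 N).filter fun l =>
          α (w 1) < α l + n ∨ (α l + n = α (w 1) ∧ l < w 1)) ⊆ Finset.Icc 1 (len N α) := by
        intro l hl
        simp only [Finset.mem_filter, Finset.mem_Icc] at hl ⊢
        refine ⟨hl.1.1, ?_⟩
        rcases hl.2 with hx | ⟨hx, hy⟩
        · have hlnz : α l ≠ 0 := by omega
          exact Finset.le_sup (f := id) (by
            simp only [Finset.mem_filter, Finset.mem_Icc]
            exact ⟨⟨hl.1.1, hl.1.2⟩, hlnz⟩)
        · omega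
      have := Finset.card_le_card hsub
      rw [hCcard, Nat.card_Icc] at this
      omega
    have hwtM : M ≤ wt N α := by
      have := Nat.le_mul_of_pos_left M (show 0 < n by omega)
      omega
    omega
  have hC_not : ¬(α (w 1) < α (w (m + 1)) + n ∨
      (α (w (m + 1)) + n = α (w 1) ∧ w (m + 1) < w 1)) := by
    intro hc
    have hx := hX (w (m + 1)) (hw (m + 1) (by omega)).1 (hwle (m + 1) (by omega) (by omega)) hc
    rw [(hw (m + 1) (by omega)).2] at hx
    omega
  -- the values of β
  have hb1 : ∀ i, 1 ≤ i → i ≤ t → (β (w i) : ℚ) = (α (w i) : ℚ) - (k + 1) * n := by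
    intro i h h'
    have hz := (hβ i h).1 h'
    have h2 : ((β (w i) : ℤ) : ℚ) = ((α (w i) : ℤ) : ℚ) - ((k : ℚ) + 1) * n := by
      rw [hz]; push_cast; ring
    push_cast at h2
    exact h2
  have hb2 : ∀ i, t < i → i ≤ m → (β (w i) : ℚ) = (α (w i) : ℚ) - k * n := by
    intro i h h'
    have hz := (hβ i (by omega)).2.1 h h'
    have h2 : ((β (w i) : ℤ) : ℚ) = ((α (w i) : ℤ) : ℚ) - (k : ℚ) * n := by
      rw [hz]; push_cast; ring
    push_cast at h2
    exact h2
  have hb3 : ∀ i, m < i → i ≤ m + T → (β (w i) : ℚ) = (α (w i) : ℚ) + n := by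
    intro i h h'
    have hz := (hβ i (by omega)).2.2.1 h h'
    rw [hz]; push_cast; ring
  have hb4 : ∀ i, m + T < i → (β (w i) : ℚ) = (α (w i) : ℚ) := by
    intro i h
    have hz := (hβ i (by omega)).2.2.2 h
    rw [hz]
  -- the new ranking order
  set W : ℕ → ℕ := fun ρ => if ρ ≤ T then w (m + ρ) else if ρ ≤ T + (m - t) then w (ρ - m * k)
    else if ρ ≤ m + T then w (ρ - m * (k + 1)) else w ρ with hWdef
  have hWmem : ∀ ρ, 1 ≤ ρ → ρ ≤ N → 1 ≤ W ρ ∧ W ρ ≤ N := by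
    intro ρ h1 h2
    simp only [hWdef]
    split_ifs with hA hB hC
    · exact ⟨(hw _ (by omega)).1, hwle _ (by omega) (by omega)⟩
    · exact ⟨(hw _ (by omega)).1, hwle _ (by omega) (by omega)⟩
    · exact ⟨(hw _ (by omega)).1, hwle _ (by omega) (by omega)⟩
    · exact ⟨(hw _ (by omega)).1, hwle _ (by omega) (by omega)⟩
  have hchain : ∀ ρ, 1 ≤ ρ → ρ + 1 ≤ N →
      LO ((β (W ρ) : ℚ)) (W ρ) ((β (W (ρ + 1)) : ℚ)) (W (ρ + 1)) := by
    intro ρ h1 h2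
    by_cases hA : ρ + 1 ≤ T
    · -- inside group A
      have e1 : W ρ = w (m + ρ) := by simp only [hWdef]; rw [if_pos (by omega)]
      have e2 : W (ρ + 1) = w (m + ρ + 1) := by
        simp only [hWdef]; rw [if_pos (by omega)]; congr 1
      rw [e1, e2, hb3 (m + ρ) (by omega) (by omega), hb3 (m + ρ + 1) (by omega) (by omega)]
      exact LO_shift (n : ℚ) (hsorted (m + ρ) (m + ρ + 1) (by omega) (by omega) (by omega))
    by_cases hB : ρ = T
    · rw [hB]
      by_cases htm' : t = m
      · -- boundary A → C (t = m)
        have e1 : W T = w (m + T) := by simp only [hWdef]; rw [if_pos le_rfl]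
        have e2 : W (T + 1) = w 1 := by
          simp only [hWdef]
          rw [if_neg (by omega), if_neg (by omega), if_pos (by omega)]
          congr 1
          omega
        have hmm2 : m * (k + 2) = m * k + 2 * m := by ring
        have hξ1 := hξ (k + 2) 1 le_rfl hm1
        rw [show m * (k + 2) + 1 = m + T + 1 by omega] at hξ1
        rw [hξ1] at hT3
        have hineq : tilde N α (w 1) + ((-(n * (k + 2) : ℤ)) : ℚ) < tilde N α (w (m + T)) := by
          push_cast at hT3 ⊢
          linarith
        have hlo := tilde_lt_LO N α (w 1) (w (m + T)) (-(n * (k + 2) : ℤ))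
          hw1p.1 hw1N (hw (m + T) (by omega)).1 (hwle (m + T) (by omega) (by omega)) hineq
        rw [e1, e2, hb3 (m + T) (by omega) (by omega), hb1 1 le_rfl (by omega)]
        refine LO_of_eq rfl ?_ (LO_shift (n : ℚ) hlo)
        push_cast
        ring
      · -- boundary A → B (t < m)
        have e1 : W T = w (m + T) := by simp only [hWdef]; rw [if_pos le_rfl]
        have e2 : W (T + 1) = w (t + 1) := by
          simp only [hWdef]
          rw [if_neg (by omega), if_pos (by omega)]
          congr 1
          omega
        have hξ1 := hξ (k + 1) (t + 1) (by omega) (by omega)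
        rw [show m * (k + 1) + (t + 1) = m + T + 1 by omega] at hξ1
        rw [hξ1] at hT3
        have hineq : tilde N α (w (t + 1)) + ((-(n * (k + 1) : ℤ)) : ℚ) <
            tilde N α (w (m + T)) := by
          push_cast at hT3 ⊢
          linarith
        have hlo := tilde_lt_LO N α (w (t + 1)) (w (m + T)) (-(n * (k + 1) : ℤ))
          (hw (t + 1) (by omega)).1 (hwle (t + 1) (by omega) (by omega))
          (hw (m + T) (by omega)).1 (hwle (m + T) (by omega) (by omega)) hineq
        rw [e1, e2, hb3 (m + T) (by omega) (by omega), hb2 (t + 1) (by omega) (by omega)]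
        refine LO_of_eq rfl ?_ (LO_shift (n : ℚ) hlo)
        push_cast
        ring
    by_cases hC : ρ + 1 ≤ T + (m - t)
    · -- inside group B
      have e1 : W ρ = w (ρ - m * k) := by
        simp only [hWdef]; rw [if_neg (by omega), if_pos (by omega)]
      have e2 : W (ρ + 1) = w (ρ - m * k + 1) := by
        simp only [hWdef]
        rw [if_neg (by omega), if_pos (by omega)]
        congr 1
        omega
      rw [e1, e2, hb2 (ρ - m * k) (by omega) (by omega),
        hb2 (ρ - m * k + 1) (by omega) (by omega)]
      have hs := hsorted (ρ - m * k) (ρ - m * k + 1) (by omega) (by omega) (by omega)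
      refine LO_of_eq ?_ ?_ (LO_shift (-((k : ℚ) * n)) hs) <;> ring
    by_cases hD : ρ = T + (m - t)
    · -- boundary B → C
      have htlt : t < m := by omega
      have e1 : W ρ = w m := by
        simp only [hWdef]
        rw [if_neg (by omega), if_pos (by omega)]
        congr 1
        omega
      have e2 : W (ρ + 1) = w 1 := by
        simp only [hWdef]
        rw [if_neg (by omega), if_neg (by omega), if_pos (by omega)]
        congr 1
        omega
      rw [e1, e2, hb2 m (by omega) le_rfl, hb1 1 le_rfl ht1]
      have hexp : ((k : ℚ) + 1) * n = k * n + n := by ring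
      rcases hC_rank m hm1 le_rfl with hc | ⟨hc, hc'⟩
      · left
        have hcast : (α (w 1) : ℚ) < (α (w m) : ℚ) + n := by exact_mod_cast hc
        linarith
      · right
        constructor
        · have hcast : (α (w m) : ℚ) + n = (α (w 1) : ℚ) := by exact_mod_cast hc
          linarith
        · exact hc'
    by_cases hE : ρ + 1 ≤ m + T
    · -- inside group C
      have e1 : W ρ = w (ρ - m * (k + 1)) := by
        simp only [hWdef]
        rw [if_neg (by omega), if_neg (by omega), if_pos (by omega)]
      have e2 : W (ρ + 1) = w (ρ - m * (k + 1) + 1) := by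
        simp only [hWdef]
        rw [if_neg (by omega), if_neg (by omega), if_pos (by omega)]
        congr 1
        omega
      rw [e1, e2, hb1 (ρ - m * (k + 1)) (by omega) (by omega),
        hb1 (ρ - m * (k + 1) + 1) (by omega) (by omega)]
      have hs := hsorted (ρ - m * (k + 1)) (ρ - m * (k + 1) + 1) (by omega) (by omega) (by omega)
      refine LO_of_eq ?_ ?_ (LO_shift (-(((k : ℚ) + 1) * n)) hs) <;> ring
    by_cases hF : ρ = m + T
    · -- boundary C → D
      have e1 : W ρ = w t := by
        simp only [hWdef]
        rw [if_neg (by omega), if_neg (by omega), if_pos (by omega)]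
        congr 1
        omega
      have e2 : W (ρ + 1) = w (m + T + 1) := by
        simp only [hWdef]
        rw [if_neg (by omega), if_neg (by omega), if_neg (by omega)]
        congr 1
        omega
      rw [e1, e2, hb1 t ht1 le_rfl, hb4 (m + T + 1) (by omega)]
      by_cases hT2' : 2 ≤ T
      · have hs2 := hT2 (T - 1) (by omega) (by omega)
        have hξ1 := hξ (k + 1) t ht1 htm
        rw [show m * (k + 1) + t = m + (T - 1) + 1 by omega] at hξ1
        rw [hξ1] at hs2
        have hineq : tilde N α (w (m + (T - 1))) + ((n * (k + 1) : ℕ) : ℚ) <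
            tilde N α (w t) := by
          push_cast at hs2 ⊢
          linarith
        have hineq' : tilde N α (w (m + (T - 1))) + (((n * (k + 1) : ℕ) : ℤ) : ℚ) <
            tilde N α (w t) := by
          push_cast
          push_cast at hineq
          linarith
        have hlo := tilde_lt_LO N α (w (m + (T - 1))) (w t) ((n * (k + 1) : ℕ) : ℤ)
          (hw _ (by omega)).1 (hwle _ (by omega) (by omega))
          (hw t ht1).1 (hwle t ht1 (by omega)) hineq'
        have hs3 := hsorted (m + (T - 1)) (m + T + 1) (by omega) (by omega) (by omega)
        exact LO_trans (LO_of_eq (by push_cast; ring) (by push_cast; ring)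
          (LO_shift (-((n : ℚ) * ((k : ℚ) + 1))) hlo)) hs3
      · -- T = 1
        have hT1' : T = 1 := by omega
        have hk0 : k = 0 := by
          have hz : m * k = 0 := by omega
          rcases Nat.mul_eq_zero.1 hz with h | h
          · omega
          · exact h
        have ht1'' : t = 1 := by omega
        have step1 : LO ((α (w t) : ℚ) - ((k : ℚ) + 1) * n) (w t)
            ((α (w (m + 1)) : ℚ)) (w (m + 1)) := by
          rw [ht1'', hk0]
          by_cases hlt : α (w (m + 1)) + n < α (w 1)
          · left
            have hcast : (α (w (m + 1)) : ℚ) + n < (α (w 1) : ℚ) := by exact_mod_cast hlt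
            push_cast
            linarith
          · have heq : α (w (m + 1)) + n = α (w 1) := by
              obtain ⟨h1', h2'⟩ := not_or.1 hC_not
              omega
            have hne : w 1 ≠ w (m + 1) := by
              intro hx
              have := hweq 1 (m + 1) le_rfl (by omega) hx
              omega
            have hw1lt : w 1 < w (m + 1) := by
              obtain ⟨h1', h2'⟩ := not_or.1 hC_not
              have : ¬ (w (m + 1) < w 1) := by
                intro hy
                exact h2' ⟨heq, hy⟩
              omega
            right
            constructor
            · have hcast : (α (w (m + 1)) : ℚ) + n = (α (w 1) : ℚ) := by exact_mod_cast heq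
              push_cast
              linarith
            · exact hw1lt
        have step2 := hsorted (m + 1) (m + T + 1) (by omega) (by omega) (by omega)
        exact LO_trans step1 step2
    · -- inside group D
      have hFgt : m + T < ρ := by omega
      have e1 : W ρ = w ρ := by
        simp only [hWdef]
        rw [if_neg (by omega), if_neg (by omega), if_neg (by omega)]
      have e2 : W (ρ + 1) = w (ρ + 1) := by
        simp only [hWdef]
        rw [if_neg (by omega), if_neg (by omega), if_neg (by omega)]
      rw [e1, e2, hb4 ρ (by omega), hb4 (ρ + 1) (by omega)]
      exact hsorted ρ (ρ + 1) (by omega) (by omega) (by omega)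
  have hrnkW : ∀ ρ, 1 ≤ ρ → ρ ≤ N → rnk N β (W ρ) = ρ := by
    apply chain_eq
    · exact rnk_pos N β (W 1) (hWmem 1 le_rfl hN).1
    · exact rnk_le N β (W N) (hWmem N hN le_rfl).2
    · intro ρ hr1 hr2
      exact rnk_lt N β (W ρ) (W (ρ + 1)) (hWmem ρ hr1 (by omega)).2
        (hWmem (ρ + 1) (by omega) hr2).1 (hWmem (ρ + 1) (by omega) hr2).2 (hchain ρ hr1 hr2)
  refine ⟨?_, ?_, ?_, ?_⟩
  · intro i hi1 hi2
    have hr := hrnkW i hi1 (by omega)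
    rwa [show W i = w (m + i) from by simp only [hWdef]; rw [if_pos hi2]] at hr
  · intro i hi1 hi2
    have hr := hrnkW (m * k + t + i) (by omega) (by omega)
    rwa [show W (m * k + t + i) = w (t + i) from by
      simp only [hWdef]
      rw [if_neg (by omega), if_pos (by omega)]
      congr 1
      omega] at hr
  · intro i hi1 hi2
    have hr := hrnkW (m * (k + 1) + i) (by omega) (by omega)
    rwa [show W (m * (k + 1) + i) = w i from by
      simp only [hWdef]
      rw [if_neg (by omega), if_neg (by omega), if_pos (by omega)]
      congr 1
      omega] at hr
  · intro i hi1 hi2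
    have hr := hrnkW i (by omega) hi2
    rwa [show W i = w i from by
      simp only [hWdef]
      rw [if_neg (by omega), if_neg (by omega), if_neg (by omega)]] at hr
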